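/- arXiv:1306.3601 — 2 statements merged into one kernel-verified Lean document; each statement's English description precedes it below -/
import Mathlib

section
/- Let 1 < p ≤ 2, let w, r, γ > 0 with r ≤ w, and let x', y' ∈ ℝ^t satisfy ‖x'-y'‖_p ≤ r. Then every point z in the ℓ_p ball of radius w·(1-(2+γ)r^p/(2w)^p)^{1/p} centered at (x'+y')/2 lies in at least one of: (a) the intersection B_p(x',w) ∩ B_p(y',w), (b) the ball B_p(x', w·(1-(2+2γ)r^p/(2w)^p)^{1/p}), or (c) the ball B_p(y', w·(1-(2+2γ)r^p/(2w)^p)^{1/p}). -/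
open Finset NNReal

noncomputable def pnorm (p : ℝ) {t : ℕ} (x : Fin t → ℝ) : ℝ :=
  (∑ i, |x i| ^ p) ^ (1 / p)

noncomputable def ballp (p : ℝ) {t : ℕ} (c : Fin t → ℝ) (R : ℝ) : Set (Fin t → ℝ) :=
  {z | pnorm p (z - c) ≤ R}

lemma aux_subadd {q : ℝ} (hq0 : 0 < q) (hq1 : q ≤ 1) {A B : ℝ} (hA : 0 ≤ A) (hB : 0 ≤ B) :
    (A + B) ^ q ≤ A ^ q + B ^ q := by
  lift A to ℝ≥0 using hA
  lift B to ℝ≥0 using hB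
  exact_mod_cast NNReal.rpow_add_le_add_rpow A B hq0.le hq1

lemma aux_concave {q : ℝ} (hq0 : 0 < q) (hq1 : q ≤ 1) {A B : ℝ} (hA : 0 ≤ A) (hB : 0 ≤ B) :
    A ^ q + B ^ q ≤ 2 ^ (1 - q) * (A + B) ^ q := by
  lift A to ℝ≥0 using hA
  lift B to ℝ≥0 using hB
  have h := NNReal.rpow_add_le_mul_rpow_add_rpow (A ^ q) (B ^ q) (p := 1/q) (one_le_one_div hq0 hq1)
  rw [← NNReal.rpow_mul, ← NNReal.rpow_mul, mul_one_div_cancel hq0.ne', NNReal.rpow_one,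
    NNReal.rpow_one] at h
  have h2 := NNReal.rpow_le_rpow h hq0.le
  rw [← NNReal.rpow_mul, one_div_mul_cancel hq0.ne', NNReal.rpow_one, NNReal.mul_rpow,
    ← NNReal.rpow_mul] at h2
  have he : (1/q - 1) * q = 1 - q := by field_simp
  rw [he] at h2
  exact_mod_cast h2

lemma abs_rpow_eq_sq {p : ℝ} (x : ℝ) : |x| ^ p = (x ^ 2) ^ (p / 2) := by
  rw [← sq_abs, ← Real.rpow_natCast |x| 2, ← Real.rpow_mul (abs_nonneg x)]
  norm_num
  ring_nf

lemma clarkson_scalar {p : ℝ} (hp1 : 1 ≤ p) (hp2 : p ≤ 2) (s d : ℝ) :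
    |s + d| ^ p + |s - d| ^ p ≤ 2 * (|s| ^ p + |d| ^ p) := by
  have hq0 : 0 < p / 2 := by linarith
  have hq1 : p / 2 ≤ 1 := by linarith
  rw [abs_rpow_eq_sq, abs_rpow_eq_sq, abs_rpow_eq_sq, abs_rpow_eq_sq]
  calc ((s+d)^2) ^ (p/2) + ((s-d)^2) ^ (p/2)
      ≤ 2 ^ (1 - p/2) * ((s+d)^2 + (s-d)^2) ^ (p/2) :=
        aux_concave hq0 hq1 (sq_nonneg _) (sq_nonneg _)
    _ = 2 ^ (1 - p/2) * (2 * (s^2 + d^2)) ^ (p/2) := by ring_nf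
    _ = 2 ^ (1 - p/2) * (2 ^ (p/2) * (s^2 + d^2) ^ (p/2)) := by
        rw [Real.mul_rpow (by norm_num) (by positivity)]
    _ = 2 * (s^2 + d^2) ^ (p/2) := by
        rw [← mul_assoc, ← Real.rpow_add (by norm_num : (0:ℝ) < 2)]
        norm_num
    _ ≤ 2 * ((s^2) ^ (p/2) + (d^2) ^ (p/2)) := by
        have := aux_subadd hq0 hq1 (sq_nonneg s) (sq_nonneg d)
        linarith

lemma pnorm_le_iff {p : ℝ} (hp : 0 < p) {t : ℕ} (v : Fin t → ℝ) {R : ℝ} (hR : 0 ≤ R) :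
    pnorm p v ≤ R ↔ ∑ i, |v i| ^ p ≤ R ^ p := by
  have hS : (0:ℝ) ≤ ∑ i, |v i| ^ p :=
    Finset.sum_nonneg fun i _ => Real.rpow_nonneg (abs_nonneg _) _
  unfold pnorm
  constructor
  · intro h
    have := Real.rpow_le_rpow (Real.rpow_nonneg hS _) h hp.le
    rwa [← Real.rpow_mul hS, one_div_mul_cancel hp.ne', Real.rpow_one] at this
  · intro h
    have := Real.rpow_le_rpow hS h (by positivity : (0:ℝ) ≤ 1/p)
    rwa [← Real.rpow_mul hR, mul_one_div_cancel hp.ne', Real.rpow_one] at this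

theorem close_balls_cover (p : ℝ) (hp1 : 1 < p) (hp2 : p ≤ 2) (t : ℕ)
    (w r γ : ℝ) (hw : 0 < w) (hr : 0 < r) (hγ : 0 < γ) (hrw : r ≤ w)
    (hrad : (2 + 2 * γ) * r ^ p ≤ (2 * w) ^ p)
    (x' y' : Fin t → ℝ) (hxy : pnorm p (x' - y') ≤ r)
    (z : Fin t → ℝ)
    (hz : z ∈ ballp p ((x' + y') / 2) (w * (1 - (2 + γ) * r ^ p / (2 * w) ^ p) ^ (1 / p))) :
    z ∈ (ballp p x' w ∩ ballp p y' w) ∪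
        ballp p x' (w * (1 - (2 + 2 * γ) * r ^ p / (2 * w) ^ p) ^ (1 / p)) ∪
        ballp p y' (w * (1 - (2 + 2 * γ) * r ^ p / (2 * w) ^ p) ^ (1 / p)) := by
  have hp0 : 0 < p := by linarith
  have h2wp : (0:ℝ) < (2 * w) ^ p := Real.rpow_pos_of_pos (by linarith) p
  have hrp : (0:ℝ) < r ^ p := Real.rpow_pos_of_pos hr p
  have hwp : (0:ℝ) < w ^ p := Real.rpow_pos_of_pos hw p
  have h2p : (0:ℝ) < 2 ^ p := Real.rpow_pos_of_pos (by norm_num) p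
  have h2w : (2 * w) ^ p = 2 ^ p * w ^ p := Real.mul_rpow (by norm_num) hw.le
  set E' : ℝ := (2 + γ) * r ^ p / (2 * w) ^ p with hE'
  set E : ℝ := (2 + 2 * γ) * r ^ p / (2 * w) ^ p with hE
  have hE1 : E ≤ 1 := by rw [hE, div_le_one h2wp]; exact hrad
  have hE'E : E' ≤ E := by
    rw [hE, hE']
    have hnum : (2 + γ) * r ^ p ≤ (2 + 2 * γ) * r ^ p := by nlinarith
    exact (div_le_div_iff_of_pos_right h2wp).mpr hnum
  have hE'1 : E' ≤ 1 := hE'E.trans hE1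
  have hE0 : 0 ≤ E := by rw [hE]; positivity
  have hE'0 : 0 ≤ E' := by rw [hE']; positivity
  have hEwp : w ^ p * E = (2 + 2*γ) * r ^ p / 2 ^ p := by
    rw [hE, h2w]; field_simp
  have hE'wp : w ^ p * E' = (2 + γ) * r ^ p / 2 ^ p := by
    rw [hE', h2w]; field_simp
  set S := ∑ i, |(z - x') i| ^ p with hS
  set T := ∑ i, |(z - y') i| ^ p with hT
  set M := ∑ i, |(z - (x' + y') / 2) i| ^ p with hM
  set D := ∑ i, |(x' - y') i| ^ p with hD
  have hSnn : 0 ≤ S := Finset.sum_nonneg fun i _ => Real.rpow_nonneg (abs_nonneg _) _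
  have hTnn : 0 ≤ T := Finset.sum_nonneg fun i _ => Real.rpow_nonneg (abs_nonneg _) _
  have hradnn : (0:ℝ) ≤ w * (1 - E') ^ (1/p) :=
    mul_nonneg hw.le (Real.rpow_nonneg (by linarith) _)
  have hMle : M ≤ w ^ p * (1 - E') := by
    have := (pnorm_le_iff hp0 (z - (x' + y') / 2) hradnn).mp hz
    rwa [Real.mul_rpow hw.le (Real.rpow_nonneg (by linarith) _),
      ← Real.rpow_mul (by linarith), one_div_mul_cancel hp0.ne', Real.rpow_one] at this
  have hDle : D ≤ r ^ p := (pnorm_le_iff hp0 (x' - y') hr.le).mp hxy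
  have hkey : S + T ≤ 2 * M + 2 * (D / 2 ^ p) := by
    rw [hS, hT, hM, hD, ← Finset.sum_add_distrib, Finset.mul_sum, Finset.sum_div,
      Finset.mul_sum, ← Finset.sum_add_distrib]
    apply Finset.sum_le_sum
    intro i _
    have h1 : (z - x') i = (z i - (x' i + y' i)/2) + ((y' i - x' i)/2) := by
      simp only [Pi.sub_apply]; ring
    have h2 : (z - y') i = (z i - (x' i + y' i)/2) - ((y' i - x' i)/2) := by
      simp only [Pi.sub_apply]; ring
    have h3 : |(z - (x' + y') / 2) i| = |z i - (x' i + y' i)/2| := by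
      simp only [Pi.sub_apply, Pi.add_apply, Pi.div_apply, Pi.ofNat_apply]
    have h4 : |(x' - y') i| ^ p / 2 ^ p = |(y' i - x' i)/2| ^ p := by
      rw [← Real.div_rpow (abs_nonneg _) (by norm_num : (0:ℝ) ≤ 2)]
      congr 1
      rw [abs_div, Pi.sub_apply, abs_sub_comm]
      norm_num
    rw [h1, h2, h3, h4]
    have := clarkson_scalar hp1.le hp2 (z i - (x' i + y' i)/2) ((y' i - x' i)/2)
    linarith
  clear_value S T M D E E'
  clear hz hxy
  have hD2 : D / 2 ^ p ≤ r ^ p / 2 ^ p := by gcongr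
  have hST : S + T ≤ w ^ p + w ^ p * (1 - E) := by
    have h1 : S + T ≤ 2 * (w ^ p * (1 - E')) + 2 * (r ^ p / 2 ^ p) := by linarith
    have key : w ^ p * E = 2 * (w ^ p * E') - 2 * (r ^ p / 2 ^ p) := by
      rw [hEwp, hE'wp]; ring
    nlinarith [key, h1]
  have hsmall : ∀ (c : Fin t → ℝ), (∑ i, |(z - c) i| ^ p) ≤ w ^ p * (1 - E) →
      z ∈ ballp p c (w * (1 - E) ^ (1/p)) := by
    intro c hc
    have h1E : (0:ℝ) ≤ 1 - E := by linarith
    have : (0:ℝ) ≤ w * (1 - E) ^ (1/p) := mul_nonneg hw.le (Real.rpow_nonneg h1E _)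
    apply (pnorm_le_iff hp0 (z - c) this).mpr
    rwa [Real.mul_rpow hw.le (Real.rpow_nonneg h1E _), ← Real.rpow_mul h1E,
      one_div_mul_cancel hp0.ne', Real.rpow_one]
  by_cases hSc : S ≤ w ^ p
  · by_cases hTc : T ≤ w ^ p
    · rw [hS] at hSc; rw [hT] at hTc
      exact Or.inl (Or.inl ⟨(pnorm_le_iff hp0 (z - x') hw.le).mpr hSc,
        (pnorm_le_iff hp0 (z - y') hw.le).mpr hTc⟩)
    · push_neg at hTc
      refine Or.inl (Or.inr (hsmall x' ?_))
      rw [← hS]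
      linarith
  · push_neg at hSc
    refine Or.inr (hsmall y' ?_)
    rw [← hT]
    linarith
end

section
/- Let 1 < p ≤ 2, let w > 0 and c > 0 with (p-1)c^2/4 ≤ w^2, and let x', y' ∈ ℝ^t satisfy ‖x'-y'‖_p ≥ c. Then the intersection B_p(x', w) ∩ B_p(y', w) is contained in the ℓ_p ball of radius w·√(1-(p-1)c²/(4w²)) centered at (x'+y')/2. -/
open Real Set Finset

-- (1+s)^(q-1) + (1-s)^(q-1) ≥ 2 for 0<s<1, q ≤ 1
lemma convex_pair {q s : ℝ} (hq1 : q ≤ 1) (hs0 : 0 < s) (hs1 : s < 1) :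
    2 ≤ (1 + s) ^ (q - 1) + (1 - s) ^ (q - 1) := by
  set a := (1 + s) ^ (q - 1) with hA
  set b := (1 - s) ^ (q - 1) with hB
  have hap : 0 < a := Real.rpow_pos_of_pos (by linarith) _
  have hbp : 0 < b := Real.rpow_pos_of_pos (by linarith) _
  have hab : 1 ≤ a * b := by
    rw [hA, hB, ← Real.mul_rpow (by linarith) (by linarith)]
    have hbase : (1 + s) * (1 - s) ≤ 1 := by nlinarith
    have hbasep : 0 < (1 + s) * (1 - s) := by nlinarith
    exact Real.one_le_rpow_of_pos_of_le_one_of_nonpos hbasep hbase (by linarith)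
  nlinarith [sq_nonneg (a - b)]

lemma stepA {p : ℝ} (hp1 : 1 < p) (hp2 : p ≤ 2) {t : ℝ} (ht0 : 0 ≤ t) (ht1 : t ≤ 1) :
    2 * (p - 1) * t ≤ (1 + t) ^ (p - 1) - (1 - t) ^ (p - 1) := by
  set q := p - 1 with hq
  have hq0 : 0 < q := by simp only [hq]; linarith
  have hq1 : q ≤ 1 := by simp only [hq]; linarith
  set φ : ℝ → ℝ := fun t => (1 + t) ^ q - (1 - t) ^ q - 2 * q * t with hφ
  have hcont : ContinuousOn φ (Icc 0 1) := by
    apply ContinuousOn.sub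
    apply ContinuousOn.sub
    · exact fun s _ => ((Real.continuousAt_rpow_const _ _ (Or.inr hq0.le)).comp
        (by fun_prop)).continuousWithinAt
    · exact fun s _ => ((Real.continuousAt_rpow_const _ _ (Or.inr hq0.le)).comp
        (by fun_prop)).continuousWithinAt
    · fun_prop
  have hderiv : ∀ s ∈ Ioo (0:ℝ) 1, HasDerivAt φ
      (q * ((1 + s) ^ (q - 1) + (1 - s) ^ (q - 1) - 2)) s := by
    intro s hs
    have h1 : HasDerivAt (fun t : ℝ => (1 + t) ^ q) ((q * (1 + s) ^ (q - 1)) * 1) s :=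
      (Real.hasDerivAt_rpow_const (Or.inl (by nlinarith [hs.1]))).comp s
        ((hasDerivAt_id s).const_add 1)
    have h2 : HasDerivAt (fun t : ℝ => (1 - t) ^ q) ((q * (1 - s) ^ (q - 1)) * (-1)) s :=
      (Real.hasDerivAt_rpow_const (Or.inl (by nlinarith [hs.2]))).comp s
        ((hasDerivAt_id s).const_sub 1)
    have := (h1.sub h2).sub ((hasDerivAt_id s).const_mul (2*q))
    exact this.congr_deriv (by ring)
  have hmono : MonotoneOn φ (Icc 0 1) := by
    apply monotoneOn_of_deriv_nonneg (convex_Icc 0 1) hcont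
    · rw [interior_Icc]
      exact fun s hs => (hderiv s hs).differentiableAt.differentiableWithinAt
    · rw [interior_Icc]; intro s hs; rw [(hderiv s hs).deriv]
      have := convex_pair hq1 hs.1 hs.2
      nlinarith
  have h0 : φ 0 = 0 := by simp [hφ, Real.one_rpow]
  have := hmono (left_mem_Icc.2 zero_le_one) ⟨ht0, ht1⟩ ht0
  rw [h0] at this
  simp only [hφ] at this
  linarith

lemma stepKEY {p : ℝ} (hp1 : 1 < p) (hp2 : p ≤ 2) {t : ℝ} (ht0 : 0 ≤ t) (ht1 : t ≤ 1) :
    1 + p * (p - 1) / 2 * t ^ 2 ≤ ((1 + t) ^ p + (1 - t) ^ p) / 2 := by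
  set h : ℝ → ℝ := fun t => ((1 + t) ^ p + (1 - t) ^ p) / 2 - p * (p - 1) / 2 * t ^ 2 with hh
  have hp0 : 0 < p := by linarith
  have hcont : ContinuousOn h (Icc 0 1) := by
    apply ContinuousOn.sub
    apply ContinuousOn.div_const
    apply ContinuousOn.add
    · exact fun s _ => ((Real.continuousAt_rpow_const _ _ (Or.inr hp0.le)).comp
        (by fun_prop)).continuousWithinAt
    · exact fun s _ => ((Real.continuousAt_rpow_const _ _ (Or.inr hp0.le)).comp
        (by fun_prop)).continuousWithinAt
    · fun_prop
  have hderiv : ∀ s ∈ Ioo (0:ℝ) 1, HasDerivAt h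
      (p / 2 * (((1 + s) ^ (p - 1) - (1 - s) ^ (p - 1)) - 2 * (p - 1) * s)) s := by
    intro s hs
    have h1 : HasDerivAt (fun t : ℝ => (1 + t) ^ p) ((p * (1 + s) ^ (p - 1)) * 1) s :=
      (Real.hasDerivAt_rpow_const (Or.inl (by nlinarith [hs.1]))).comp s
        ((hasDerivAt_id s).const_add 1)
    have h2 : HasDerivAt (fun t : ℝ => (1 - t) ^ p) ((p * (1 - s) ^ (p - 1)) * (-1)) s :=
      (Real.hasDerivAt_rpow_const (Or.inl (by nlinarith [hs.2]))).comp s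
        ((hasDerivAt_id s).const_sub 1)
    have h3 : HasDerivAt (fun t : ℝ => p * (p - 1) / 2 * t ^ 2)
        (p * (p - 1) / 2 * (2 * s)) s := by
      simpa using ((hasDerivAt_pow 2 s).const_mul (p * (p - 1) / 2))
    have := ((h1.add h2).div_const 2).sub h3
    exact this.congr_deriv (by ring)
  have hmono : MonotoneOn h (Icc 0 1) := by
    apply monotoneOn_of_deriv_nonneg (convex_Icc 0 1) hcont
    · rw [interior_Icc]
      exact fun s hs => (hderiv s hs).differentiableAt.differentiableWithinAt
    · rw [interior_Icc]; intro s hs; rw [(hderiv s hs).deriv]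
      have := stepA hp1 hp2 hs.1.le hs.2.le
      nlinarith
  have h0 : h 0 = 1 := by
    simp [hh, Real.one_rpow]
  have := hmono (left_mem_Icc.2 zero_le_one) ⟨ht0, ht1⟩ ht0
  rw [h0] at this
  simp only [hh] at this
  linarith


section Scalar
variable {p : ℝ} (hp1 : 1 < p) (hp2 : p ≤ 2)
include hp1 hp2

lemma case1 {t : ℝ} (ht0 : 0 ≤ t) (ht1 : t ≤ 1) :
    (1 + (p - 1) * t ^ 2) ^ (p / 2) ≤ ((1 + t) ^ p + (1 - t) ^ p) / 2 := by
  have hb := rpow_one_add_le_one_add_mul_self (s := (p - 1) * t ^ 2)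
    (by nlinarith) (by linarith : (0:ℝ) ≤ p / 2) (by linarith)
  have := stepKEY hp1 hp2 ht0 ht1
  calc (1 + (p - 1) * t ^ 2) ^ (p / 2) ≤ 1 + p / 2 * ((p - 1) * t ^ 2) := hb
    _ ≤ ((1 + t) ^ p + (1 - t) ^ p) / 2 := by nlinarith

lemma case2 {t : ℝ} (ht0 : 0 ≤ t) (ht1 : t ≤ 1) :
    (t ^ 2 + (p - 1)) ^ (p / 2) ≤ ((1 + t) ^ p + (1 - t) ^ p) / 2 := by
  have heq : t ^ 2 + (p - 1) = 1 + (t ^ 2 + p - 2) := by ring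
  have hb := rpow_one_add_le_one_add_mul_self (s := t ^ 2 + p - 2)
    (by nlinarith) (by linarith : (0:ℝ) ≤ p / 2) (by linarith)
  have := stepKEY hp1 hp2 ht0 ht1
  calc (t ^ 2 + (p - 1)) ^ (p / 2) = (1 + (t ^ 2 + p - 2)) ^ (p / 2) := by rw [← heq]
    _ ≤ 1 + p / 2 * (t ^ 2 + p - 2) := hb
    _ ≤ 1 + p * (p - 1) / 2 * t ^ 2 := by
        nlinarith [mul_nonneg (mul_nonneg (by linarith : (0:ℝ) ≤ p)
          (by linarith : (0:ℝ) ≤ 2 - p)) (by nlinarith : (0:ℝ) ≤ 1 - t ^ 2)]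
    _ ≤ ((1 + t) ^ p + (1 - t) ^ p) / 2 := this

-- pointwise for nonneg a b
lemma pointwise_nonneg {a b : ℝ} (ha : 0 ≤ a) (hb : 0 ≤ b) :
    (a ^ 2 + (p - 1) * b ^ 2) ^ (p / 2) ≤ ((a + b) ^ p + |a - b| ^ p) / 2 := by
  have hp0 : 0 < p := by linarith
  rcases le_or_gt b a with hba | hab
  · rcases eq_or_lt_of_le ha with rfl | ha0
    · -- a = 0 hence b = 0
      have hb0 : b = 0 := le_antisymm (by simpa using hba) hb
      subst hb0
      simp [Real.zero_rpow (by positivity : p / 2 ≠ 0), Real.zero_rpow hp0.ne']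
    · -- 0 < a, b ≤ a, t = b/a
      set t := b / a with htdef
      have ht0 : 0 ≤ t := div_nonneg hb ha0.le
      have ht1 : t ≤ 1 := (div_le_one ha0).mpr hba
      have key := case1 hp1 hp2 ht0 ht1
      have hmul := mul_le_mul_of_nonneg_left key
        (le_of_lt (Real.rpow_pos_of_pos ha0 p) : (0:ℝ) ≤ a ^ p)
      have e1 : a ^ p * (1 + (p - 1) * t ^ 2) ^ (p / 2) = (a ^ 2 + (p - 1) * b ^ 2) ^ (p / 2) := by
        rw [show a ^ p = (a ^ 2) ^ (p / 2) by
              rw [← Real.rpow_natCast a 2, ← Real.rpow_mul ha0.le]; congr 1; push_cast; ring,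
            ← Real.mul_rpow (by positivity) (by nlinarith)]
        congr 1
        rw [htdef]; field_simp
      have e2 : a ^ p * ((1 + t) ^ p + (1 - t) ^ p) = (a + b) ^ p + |a - b| ^ p := by
        rw [mul_add, ← Real.mul_rpow ha0.le (by linarith), ← Real.mul_rpow ha0.le (by linarith),
          abs_of_nonneg (by linarith : (0:ℝ) ≤ a - b)]
        congr 2 <;> rw [htdef] <;> field_simp
      calc (a ^ 2 + (p - 1) * b ^ 2) ^ (p / 2)
          = a ^ p * (1 + (p - 1) * t ^ 2) ^ (p / 2) := e1.symm
        _ ≤ a ^ p * (((1 + t) ^ p + (1 - t) ^ p) / 2) := hmul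
        _ = ((a + b) ^ p + |a - b| ^ p) / 2 := by rw [← e2]; ring
  · -- a < b
    have hb0 : 0 < b := lt_of_le_of_lt ha hab
    set t := a / b with htdef
    have ht0 : 0 ≤ t := div_nonneg ha hb0.le
    have ht1 : t ≤ 1 := (div_le_one hb0).mpr hab.le
    have key := case2 hp1 hp2 ht0 ht1
    have hmul := mul_le_mul_of_nonneg_left key
      (le_of_lt (Real.rpow_pos_of_pos hb0 p) : (0:ℝ) ≤ b ^ p)
    have e1 : b ^ p * (t ^ 2 + (p - 1)) ^ (p / 2) = (a ^ 2 + (p - 1) * b ^ 2) ^ (p / 2) := by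
      rw [show b ^ p = (b ^ 2) ^ (p / 2) by
            rw [← Real.rpow_natCast b 2, ← Real.rpow_mul hb0.le]; congr 1; push_cast; ring,
          ← Real.mul_rpow (by positivity) (by nlinarith)]
      congr 1
      rw [htdef]; field_simp
    have e2 : b ^ p * ((1 + t) ^ p + (1 - t) ^ p) = (a + b) ^ p + |a - b| ^ p := by
      rw [mul_add, ← Real.mul_rpow hb0.le (by linarith), ← Real.mul_rpow hb0.le (by linarith),
        abs_of_nonpos (by linarith : a - b ≤ 0)]
      congr 2 <;> rw [htdef] <;> field_simp <;> ring
    calc (a ^ 2 + (p - 1) * b ^ 2) ^ (p / 2)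
        = b ^ p * (t ^ 2 + (p - 1)) ^ (p / 2) := e1.symm
      _ ≤ b ^ p * (((1 + t) ^ p + (1 - t) ^ p) / 2) := hmul
      _ = ((a + b) ^ p + |a - b| ^ p) / 2 := by rw [← e2]; ring


end Scalar

lemma abs_pair_eq (p α β : ℝ) :
    |α + β| ^ p + |α - β| ^ p = (|α| + |β|) ^ p + |(|α| - |β|)| ^ p := by
  rcases le_or_gt 0 α with hα | hα <;> rcases le_or_gt 0 β with hβ | hβ
  · rw [abs_of_nonneg hα, abs_of_nonneg hβ, abs_of_nonneg (by linarith)]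
  · rw [abs_of_nonneg hα, abs_of_nonpos hβ.le, show α - -β = α + β by ring,
      show α + -β = α - β by ring, abs_of_nonneg (by linarith : (0:ℝ) ≤ α - β)]
    ring
  · rw [abs_of_nonpos hα.le, abs_of_nonneg hβ, abs_of_nonpos (by linarith : α - β ≤ 0),
      show -α - β = -(α + β) by ring, abs_neg, show -α + β = -(α - β) by ring]
    ring
  · rw [abs_of_nonpos hα.le, abs_of_nonpos hβ.le, abs_of_nonpos (by linarith : α + β ≤ 0),
      show -α - -β = -(α - β) by ring, abs_neg, show -α + -β = -(α + β) by ring]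

lemma pointwise {p : ℝ} (hp1 : 1 < p) (hp2 : p ≤ 2) (α β : ℝ) :
    (α ^ 2 + (p - 1) * β ^ 2) ^ (p / 2) ≤ (|α + β| ^ p + |α - β| ^ p) / 2 := by
  have h := pointwise_nonneg hp1 hp2 (abs_nonneg α) (abs_nonneg β)
  rw [sq_abs, sq_abs] at h
  rw [abs_pair_eq p α β]
  exact h

-- binary Minkowski in ℓ_r(ℝ²)
lemma binary_minkowski {r : ℝ} (hr : 1 ≤ r) {A B C D : ℝ} (hA : 0 ≤ A) (hB : 0 ≤ B)
    (hC : 0 ≤ C) (hD : 0 ≤ D) :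
    ((A + C) ^ r + (B + D) ^ r) ^ (1 / r) ≤ (A ^ r + B ^ r) ^ (1 / r) + (C ^ r + D ^ r) ^ (1 / r) := by
  have h := Real.Lp_add_le (univ : Finset (Fin 2)) ![A, B] ![C, D] hr
  simpa [Fin.sum_univ_two, abs_of_nonneg, hA, hB, hC, hD, abs_of_nonneg (by linarith : (0:ℝ) ≤ A + C),
    abs_of_nonneg (by linarith : (0:ℝ) ≤ B + D), abs_of_nonneg hA, abs_of_nonneg hB,
    abs_of_nonneg hC, abs_of_nonneg hD] using h

lemma minkowski_sum {ι : Type*} (s : Finset ι) {r : ℝ} (hr : 1 ≤ r) (f g : ι → ℝ)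
    (hf : ∀ i, 0 ≤ f i) (hg : ∀ i, 0 ≤ g i) :
    ((∑ i ∈ s, f i) ^ r + (∑ i ∈ s, g i) ^ r) ^ (1 / r) ≤
      ∑ i ∈ s, (f i ^ r + g i ^ r) ^ (1 / r) := by
  classical
  induction s using Finset.cons_induction with
  | empty =>
      have : (0:ℝ) < r := by linarith
      simp [Real.zero_rpow this.ne', Real.zero_rpow (by positivity : r⁻¹ ≠ 0)]
  | cons a s ha ih =>
    rw [Finset.sum_cons, Finset.sum_cons, Finset.sum_cons]
    calc ((f a + ∑ i ∈ s, f i) ^ r + (g a + ∑ i ∈ s, g i) ^ r) ^ (1 / r)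
        ≤ (f a ^ r + g a ^ r) ^ (1 / r) + ((∑ i ∈ s, f i) ^ r + (∑ i ∈ s, g i) ^ r) ^ (1 / r) :=
          binary_minkowski hr (hf a) (hg a) (Finset.sum_nonneg fun i _ => hf i)
            (Finset.sum_nonneg fun i _ => hg i)
      _ ≤ _ := by linarith [ih]

section
variable {p : ℝ} (hp1 : 1 < p) (hp2 : p ≤ 2) {t : ℕ}

lemma pnorm_nonneg (x : Fin t → ℝ) : 0 ≤ pnorm p x :=
  Real.rpow_nonneg (Finset.sum_nonneg fun i _ => Real.rpow_nonneg (abs_nonneg _) p) _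

include hp1

lemma pnorm_sq (x : Fin t → ℝ) : pnorm p x ^ 2 = (∑ i, |x i| ^ p) ^ (2 / p) := by
  have hS : (0:ℝ) ≤ ∑ i, |x i| ^ p :=
    Finset.sum_nonneg fun i _ => Real.rpow_nonneg (abs_nonneg _) p
  rw [pnorm, ← Real.rpow_natCast _ 2, ← Real.rpow_mul hS]
  congr 1
  push_cast
  ring

lemma pnorm_rpow_p (x : Fin t → ℝ) : pnorm p x ^ p = ∑ i, |x i| ^ p := by
  have hS : (0:ℝ) ≤ ∑ i, |x i| ^ p :=
    Finset.sum_nonneg fun i _ => Real.rpow_nonneg (abs_nonneg _) p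
  rw [pnorm, ← Real.rpow_mul hS, one_div, inv_mul_cancel₀ (by linarith : p ≠ 0), Real.rpow_one]

include hp2

lemma key (x y : Fin t → ℝ) :
    pnorm p x ^ 2 + (p - 1) * pnorm p y ^ 2 ≤
      (pnorm p (x + y) ^ 2 + pnorm p (x - y) ^ 2) / 2 := by
  have hp0 : (0:ℝ) < p := by linarith
  have hS : ∀ u : Fin t → ℝ, (0:ℝ) ≤ ∑ i, |u i| ^ p :=
    fun u => Finset.sum_nonneg fun i _ => Real.rpow_nonneg (abs_nonneg _) p
  have hq : (0:ℝ) ≤ p - 1 := by linarith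
  -- step B
  have stepB : ∑ i, ((x i) ^ 2 + (p - 1) * (y i) ^ 2) ^ (p / 2) ≤
      ((∑ i, |(x + y) i| ^ p) + ∑ i, |(x - y) i| ^ p) / 2 := by
    rw [← Finset.sum_add_distrib, Finset.sum_div]
    apply Finset.sum_le_sum
    intro i _
    simpa using pointwise hp1 hp2 (x i) (y i)
  -- step C
  have hr : (1:ℝ) ≤ 2 / p := by rw [le_div_iff₀ hp0]; linarith
  have stepC := minkowski_sum (univ : Finset (Fin t)) hr
      (fun i => |x i| ^ p) (fun i => (p - 1) ^ (p / 2) * |y i| ^ p)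
      (fun i => Real.rpow_nonneg (abs_nonneg _) p)
      (fun i => mul_nonneg (Real.rpow_nonneg hq _) (Real.rpow_nonneg (abs_nonneg _) p))
  rw [show (1:ℝ) / (2 / p) = p / 2 by rw [one_div_div]] at stepC
  -- simplify the RHS of stepC
  have eRHS : ∀ i : Fin t, ((|x i| ^ p) ^ (2 / p) + ((p - 1) ^ (p / 2) * |y i| ^ p) ^ (2 / p))
      ^ (p / 2) = ((x i) ^ 2 + (p - 1) * (y i) ^ 2) ^ (p / 2) := by
    intro i
    congr 1
    rw [Real.mul_rpow (Real.rpow_nonneg hq _) (Real.rpow_nonneg (abs_nonneg _) _),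
      ← Real.rpow_mul hq, ← Real.rpow_mul (abs_nonneg _), ← Real.rpow_mul (abs_nonneg _)]
    rw [show p * (2 / p) = 2 by field_simp, show p / 2 * (2 / p) = 1 by field_simp]
    rw [Real.rpow_one, Real.rpow_two, sq_abs, Real.rpow_two, sq_abs]
  -- simplify the LHS of stepC
  have eLHS : ((∑ i, |x i| ^ p) ^ (2 / p) + (∑ i, (p - 1) ^ (p / 2) * |y i| ^ p) ^ (2 / p))
      ^ (p / 2) = (pnorm p x ^ 2 + (p - 1) * pnorm p y ^ 2) ^ (p / 2) := by
    congr 1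
    rw [← Finset.mul_sum,
      Real.mul_rpow (Real.rpow_nonneg hq _) (hS y),
      ← Real.rpow_mul hq, show p / 2 * (2 / p) = 1 by field_simp, Real.rpow_one,
      pnorm_sq hp1, pnorm_sq hp1]
  rw [eLHS] at stepC
  simp_rw [eRHS] at stepC
  -- combine
  have hcomb : (pnorm p x ^ 2 + (p - 1) * pnorm p y ^ 2) ^ (p / 2) ≤
      (pnorm p (x + y) ^ p + pnorm p (x - y) ^ p) / 2 := by
    rw [pnorm_rpow_p hp1, pnorm_rpow_p hp1]
    exact stepC.trans stepB
  -- step D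
  have hE : (0:ℝ) ≤ pnorm p x ^ 2 + (p - 1) * pnorm p y ^ 2 := by positivity
  have hD := Real.rpow_le_rpow (Real.rpow_nonneg hE _) hcomb (by positivity : (0:ℝ) ≤ 2 / p)
  rw [← Real.rpow_mul hE, show p / 2 * (2 / p) = 1 by field_simp, Real.rpow_one] at hD
  refine hD.trans ?_
  -- power mean
  have hpm := Real.rpow_arith_mean_le_arith_mean_rpow (univ : Finset (Fin 2))
    ![1/2, 1/2] ![pnorm p (x + y) ^ p, pnorm p (x - y) ^ p]
    (by intro i _; fin_cases i <;> norm_num)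
    (by norm_num [Fin.sum_univ_two])
    (by intro i _; fin_cases i <;>
      exact Real.rpow_nonneg (pnorm_nonneg _) _) hr
  simp only [Fin.sum_univ_two, Matrix.cons_val_zero, Matrix.cons_val_one, Matrix.head_cons] at hpm
  have e1 : (pnorm p (x + y) ^ p) ^ (2/p) = pnorm p (x + y) ^ 2 := by
    rw [← Real.rpow_mul (pnorm_nonneg _), show p * (2/p) = 2 by field_simp, Real.rpow_two]
  have e2 : (pnorm p (x - y) ^ p) ^ (2/p) = pnorm p (x - y) ^ 2 := by
    rw [← Real.rpow_mul (pnorm_nonneg _), show p * (2/p) = 2 by field_simp, Real.rpow_two]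
  rw [e1, e2] at hpm
  calc ((pnorm p (x + y) ^ p + pnorm p (x - y) ^ p) / 2) ^ (2 / p)
      = (1/2 * pnorm p (x + y) ^ p + 1/2 * pnorm p (x - y) ^ p) ^ (2/p) := by ring_nf
    _ ≤ 1/2 * pnorm p (x + y) ^ 2 + 1/2 * pnorm p (x - y) ^ 2 := hpm
    _ = (pnorm p (x + y) ^ 2 + pnorm p (x - y) ^ 2) / 2 := by ring


end

lemma pnorm_half {p : ℝ} (hp : 0 < p) {t : ℕ} (x' y' : Fin t → ℝ) :
    pnorm p ((y' - x') / 2) = pnorm p (x' - y') / 2 := by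
  have e : ∀ i : Fin t, |((y' - x') / 2) i| ^ p = |(x' - y') i| ^ p / 2 ^ p := by
    intro i
    have : ((y' - x') / 2) i = -((x' - y') i) / 2 := by
      simp [Pi.div_apply, Pi.sub_apply]
    rw [this, abs_div, abs_neg]
    rw [Real.div_rpow (abs_nonneg _) (by norm_num : (0:ℝ) ≤ |2|)]
    norm_num
  rw [pnorm, pnorm]
  simp_rw [e]
  rw [← Finset.sum_div, Real.div_rpow (Finset.sum_nonneg fun i _ =>
    Real.rpow_nonneg (abs_nonneg _) p) (Real.rpow_nonneg (by norm_num) p),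
    ← Real.rpow_mul (by norm_num : (0:ℝ) ≤ 2), mul_one_div_cancel hp.ne', Real.rpow_one]

theorem far_balls_intersection_small (p : ℝ) (hp1 : 1 < p) (hp2 : p ≤ 2) (t : ℕ)
    (w c : ℝ) (hw : 0 < w) (hc : 0 < c) (hcw : (p - 1) * c ^ 2 / 4 ≤ w ^ 2)
    (x' y' : Fin t → ℝ) (hxy : c ≤ pnorm p (x' - y')) :
    ballp p x' w ∩ ballp p y' w ⊆
      ballp p ((x' + y') / 2) (w * Real.sqrt (1 - (p - 1) * c ^ 2 / (4 * w ^ 2))) := by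
  intro z hz
  obtain ⟨h1, h2⟩ := hz
  simp only [ballp, Set.mem_setOf_eq] at h1 h2 ⊢
  set u := z - (x' + y') / 2 with hu
  set v := (y' - x') / 2 with hv
  have huv1 : u + v = z - x' := by
    funext i
    simp [hu, hv, Pi.add_apply, Pi.sub_apply, Pi.div_apply]
    ring
  have huv2 : u - v = z - y' := by
    funext i
    simp [hu, hv, Pi.add_apply, Pi.sub_apply, Pi.div_apply]
    ring
  have hk := key hp1 hp2 u v
  rw [huv1, huv2] at hk
  have hq : (0:ℝ) ≤ p - 1 := by linarith
  have hvn : c / 2 ≤ pnorm p v := by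
    rw [hv, pnorm_half (by linarith) x' y']
    linarith
  have hv2 : (c / 2) ^ 2 ≤ pnorm p v ^ 2 :=
    pow_le_pow_left₀ (by positivity) hvn 2
  have h1' : pnorm p (z - x') ^ 2 ≤ w ^ 2 := pow_le_pow_left₀ (pnorm_nonneg _) h1 2
  have h2' : pnorm p (z - y') ^ 2 ≤ w ^ 2 := pow_le_pow_left₀ (pnorm_nonneg _) h2 2
  have hu2 : pnorm p u ^ 2 ≤ w ^ 2 - (p - 1) * c ^ 2 / 4 := by
    have := mul_le_mul_of_nonneg_left hv2 hq
    nlinarith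
  have hEeq : w ^ 2 * (1 - (p - 1) * c ^ 2 / (4 * w ^ 2)) = w ^ 2 - (p - 1) * c ^ 2 / 4 := by
    field_simp
  have hsq : w * Real.sqrt (1 - (p - 1) * c ^ 2 / (4 * w ^ 2)) =
      Real.sqrt (w ^ 2 - (p - 1) * c ^ 2 / 4) := by
    rw [← hEeq, Real.sqrt_mul (sq_nonneg w), Real.sqrt_sq hw.le]
  rw [hsq]
  exact (Real.le_sqrt (pnorm_nonneg _) (by linarith)).mpr hu2
end
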